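/- If Λ and Ξ are approximate subgroups of a group Γ and k, l ≥ 2, then Λᵏ ∩ Ξˡ is an approximate subgroup of Γ. -/
import Mathlib


open Pointwise

/-- An approximate subgroup of a group: a symmetric unital subset `A` with `A² ⊆ A·F`
for some finite `F`. -/
def IsApproxSubgroup {G : Type*} [Group G] (A : Set G) : Prop :=
  A⁻¹ = A ∧ (1 : G) ∈ A ∧ ∃ F : Set G, F.Finite ∧ A * A ⊆ A * F

private lemma finite_pow {G : Type*} [Group G] {A : Set G} (hA : A.Finite) (n : ℕ) :
    (A ^ n).Finite := by
  induction n with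
  | zero => simp [Set.finite_singleton]
  | succ m ih => rw [pow_succ]; exact ih.mul hA

private lemma cover_pow {G : Type*} [Group G] {A F : Set G} (hsymm : A⁻¹ = A)
    (hAF : A * A ⊆ A * F) {n : ℕ} (hn : n ≠ 0) : A ^ n ⊆ F⁻¹ ^ (n - 1) * A := by
  have h2 : A ^ 2 ⊆ F⁻¹ * A := by
    have h : (A * A)⁻¹ ⊆ (A * F)⁻¹ := Set.inv_subset_inv.2 hAF
    rw [mul_inv_rev, mul_inv_rev, hsymm] at h
    rw [sq]; exact h
  exact Set.pow_subset_pow_mul_of_sq_subset_mul h2 hn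

/-- If `L` and `X` are approximate subgroups of `G` and `k, l ≥ 2`, then `Lᵏ ∩ Xˡ` is an
approximate subgroup of `G`. -/
theorem inter_pow_approx {G : Type*} [Group G] (L X : Set G)
    (hL : IsApproxSubgroup L) (hX : IsApproxSubgroup X)
    (k l : ℕ) (hk : 2 ≤ k) (hl : 2 ≤ l) :
    IsApproxSubgroup (L ^ k ∩ X ^ l) := by
  classical
  obtain ⟨hLs, hL1, F, hFfin, hLF⟩ := hL
  obtain ⟨hXs, hX1, E, hEfin, hXE⟩ := hX
  set S : Set G := L ^ k ∩ X ^ l with hS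
  refine ⟨?_, ?_, ?_⟩
  · rw [Set.inter_inv, ← inv_pow, ← inv_pow, hLs, hXs]
  · exact ⟨Set.one_mem_pow hL1, Set.one_mem_pow hX1⟩
  · -- covering
    set F' : Set G := F⁻¹ ^ (2 * k - 1) with hF'
    set E' : Set G := E⁻¹ ^ (2 * l - 1) with hE'
    have hF'fin : F'.Finite := finite_pow hFfin.inv _
    have hE'fin : E'.Finite := finite_pow hEfin.inv _
    set g : G × G → G := fun p =>
      if h : ({p.1} * L ∩ ({p.2} * X)).Nonempty then h.choose else 1 with hg
    set T : Set G := g '' (F' ×ˢ E') with hT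
    have hTfin : T.Finite := (hF'fin.prod hE'fin).image g
    refine ⟨T⁻¹, hTfin.inv, ?_⟩
    have hSsymm : S⁻¹ = S := by
      rw [hS, Set.inter_inv, ← inv_pow, ← inv_pow, hLs, hXs]
    have hcov : ∀ a ∈ S * S, a ∈ T * S := by
      intro a ha
      have haL : a ∈ F' * L := by
        refine cover_pow hLs hLF (by omega) ?_
        have h1 : a ∈ L ^ k * L ^ k := Set.mul_subset_mul
          Set.inter_subset_left Set.inter_subset_left ha
        rwa [← pow_add, show k + k = 2 * k by ring] at h1
      have haX : a ∈ E' * X := by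
        refine cover_pow hXs hXE (by omega) ?_
        have h1 : a ∈ X ^ l * X ^ l := Set.mul_subset_mul
          Set.inter_subset_right Set.inter_subset_right ha
        rwa [← pow_add, show l + l = 2 * l by ring] at h1
      obtain ⟨f, hf, u, hu, hfu⟩ := haL
      obtain ⟨e, he, v, hv, hev⟩ := haX
      have hne : ({f} * L ∩ ({e} * X)).Nonempty :=
        ⟨a, ⟨f, rfl, u, hu, hfu⟩, ⟨e, rfl, v, hv, hev⟩⟩
      have hz : g (f, e) ∈ {f} * L ∩ ({e} * X) := by
        rw [hg]; simp only [dif_pos hne]; exact hne.choose_spec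
      set z := g (f, e) with hzdef
      have hzT : z ∈ T := ⟨(f, e), ⟨hf, he⟩, rfl⟩
      obtain ⟨⟨f1, hf1, u', hu', hzL⟩, ⟨e1, he1, v', hv', hzX⟩⟩ := hz
      rw [Set.mem_singleton_iff] at hf1 he1
      subst hf1; subst he1
      have key : z⁻¹ * a ∈ S := by
        constructor
        · have heq : z⁻¹ * a = u'⁻¹ * u := by
            rw [← hzL, ← hfu]; group
          rw [heq]
          have h2 : u'⁻¹ * u ∈ L * L := Set.mul_mem_mul (hLs ▸ Set.inv_mem_inv.2 hu') hu
          have h3 : L * L ⊆ L ^ k := by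
            rw [← sq]; exact Set.pow_subset_pow_right hL1 hk
          exact h3 h2
        · have heq : z⁻¹ * a = v'⁻¹ * v := by
            rw [← hzX, ← hev]; group
          rw [heq]
          have h2 : v'⁻¹ * v ∈ X * X := Set.mul_mem_mul (hXs ▸ Set.inv_mem_inv.2 hv') hv
          have h3 : X * X ⊆ X ^ l := by
            rw [← sq]; exact Set.pow_subset_pow_right hX1 hl
          exact h3 h2
      exact ⟨z, hzT, z⁻¹ * a, key, by group⟩
    intro a ha
    have hainv : a⁻¹ ∈ S * S := by
      have : (S * S)⁻¹ = S * S := by rw [mul_inv_rev, hSsymm]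
      rw [← this]; exact Set.inv_mem_inv.2 ha
    obtain ⟨z, hz, s, hs, hzs⟩ := hcov a⁻¹ hainv
    refine ⟨s⁻¹, hSsymm ▸ Set.inv_mem_inv.2 hs, z⁻¹, Set.inv_mem_inv.2 hz, ?_⟩
    have : a = (z * s)⁻¹ := by rw [show z * s = a⁻¹ from hzs, inv_inv]
    rw [this]; group
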